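/- Let t be an even positive integer and s = t/2. For every rational x/y (x,y positive integers) with x/y > (3t−2)/4, setting a = y·s² and b = s·x − y·C(s,2), one has a, b positive integers with a < b and (a·C(s,2) + b·(C(t,2) − 2C(s,2))) / (a·s + b·(t−2s)) = x/y. -/
import Mathlib


/-- For even `t` and `s = t/2`, every rational `x/y > (3t-2)/4` is achieved as the
rooted density `d_t^1(a,b,s)` with `a = y·s²` and `b = sx - yC(s,2)`, which are
positive integers with `a < b`. -/
theorem type1_density_range_even (t s x y : ℕ) (ht : 0 < t) (hts : t = 2 * s)
    (hx : 0 < x) (hy : 0 < y)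
    (h1 : (3 * (t : ℚ) - 2) / 4 < (x : ℚ) / y)
    (a b : ℤ)
    (ha : a = (y : ℤ) * (s : ℤ) ^ 2)
    (hb : b = (s : ℤ) * x - (y : ℤ) * (s.choose 2 : ℤ)) :
    0 < a ∧ a < b ∧
      ((a : ℚ) * (s.choose 2 : ℚ) + (b : ℚ) * ((t.choose 2 : ℚ) - 2 * (s.choose 2 : ℚ))) /
        ((a : ℚ) * s + (b : ℚ) * ((t : ℚ) - 2 * s)) = (x : ℚ) / y := by
  subst hts ha hb
  have hs : 0 < s := by omega
  have hsQ : (0:ℚ) < s := by exact_mod_cast hs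
  have hyQ : (0:ℚ) < y := by exact_mod_cast hy
  have hxQ : (0:ℚ) < x := by exact_mod_cast hx
  have hsZ : (0:ℤ) < s := by exact_mod_cast hs
  have hyZ : (0:ℤ) < y := by exact_mod_cast hy
  have hchoose : ((s.choose 2 : ℤ) : ℚ) = (s : ℚ) * ((s:ℚ) - 1) / 2 := by
    push_cast
    rw [Nat.cast_choose_two]
  have h1' : (3 * (s:ℚ) - 1) / 2 * y < x := by
    rw [div_lt_div_iff₀ (by norm_num) hyQ] at h1
    push_cast at h1 ⊢
    nlinarith
  refine ⟨by positivity, ?_, ?_⟩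
  · -- a < b in ℤ; prove via ℚ
    have : ((y : ℤ) * (s:ℤ)^2 : ℚ) < (((s:ℤ) * x - (y:ℤ) * (s.choose 2 : ℤ) : ℤ) : ℚ) := by
      push_cast [hchoose]
      nlinarith
    exact_mod_cast this
  · have ht2 : (((2*s).choose 2 : ℕ) : ℚ) = (2*(s:ℚ)) * (2*(s:ℚ) - 1) / 2 := by
      rw [Nat.cast_choose_two]; push_cast; ring
    rw [div_eq_div_iff (by push_cast [Nat.cast_choose_two]; ring_nf; positivity) (by positivity)]
    push_cast [Nat.cast_choose_two]
    ring
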